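/- Let α, β ≥ 1 be reals, λ₀ ∈ [0,1), σ_γ² = (1−λ₀)/α, λ = α/β ≤ 1, λ± = σ_γ²(1 ± √λ)². Define E_{λ₀} = (α/(2πσ_γ²λ)) ∫_{λ₋}^{λ₊} (−ln x)√((λ₊−x)(x−λ₋)) dx − λ₀ ln λ₀ (with λ₀ ln λ₀ := 0 when λ₀ = 0). Then E_{λ₀} = (1/(4αβ))[ −4αβλ₀ln λ₀ + (8αβ ln 2 − α² − β²)(1−λ₀) − 4αβ(1−λ₀)ln(−2((α+β)λ₀ − (β−α)(1−λ₀) − α − β)/(αβ)) + (α+β)(β−α)(1−λ₀) ]. -/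

import Mathlib

open Real intervalIntegral Set MeasureTheory Topology Filter

lemma abs_k_sin_le (k θ : ℝ) : |k * Real.sin θ| ≤ |k| := by
  rw [abs_mul]; exact mul_le_of_le_one_right (abs_nonneg k) (Real.abs_sin_le_one θ)

lemma D_ge (k θ : ℝ) : (1 - |k|)^2 ≤ 1 + k^2 + 2*k*Real.sin θ := by
  have h : -(k * Real.sin θ) ≤ |k| := (neg_le_abs _).trans (abs_k_sin_le k θ)
  nlinarith [sq_abs k]

lemma Dpos (k θ : ℝ) (hk : |k| < 1) : 0 < 1 + k^2 + 2*k*Real.sin θ := by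
  have := D_ge k θ
  nlinarith [mul_pos (sub_pos.mpr hk) (sub_pos.mpr hk), abs_nonneg k]

lemma one_add_k_sin_pos (k θ : ℝ) (hk : |k| < 1) : 0 < 1 + k * Real.sin θ := by
  have h : -(k * Real.sin θ) ≤ |k| := (neg_le_abs _).trans (abs_k_sin_le k θ)
  linarith

/-- antiderivative of `1/D` -/
lemma hasDerivAt_G (k : ℝ) (hk : |k| < 1) (θ : ℝ) :
    HasDerivAt (fun θ : ℝ => (θ + 2 * Real.arctan (k * Real.cos θ / (1 + k * Real.sin θ))) / (1 - k^2))
      (1 / (1 + k^2 + 2*k*Real.sin θ)) θ := by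
  have hden : 0 < 1 + k * Real.sin θ := one_add_k_sin_pos k θ hk
  have hD : 0 < 1 + k^2 + 2*k*Real.sin θ := Dpos k θ hk
  have hu : HasDerivAt (fun θ : ℝ => k * Real.cos θ / (1 + k * Real.sin θ))
      ((k * -Real.sin θ * (1 + k * Real.sin θ) - (k * Real.cos θ) * (k * Real.cos θ)) / (1 + k * Real.sin θ)^2) θ :=
    HasDerivAt.div ((Real.hasDerivAt_cos θ).const_mul k)
      (((Real.hasDerivAt_sin θ).const_mul k).const_add 1) (ne_of_gt hden)
  have ha : HasDerivAt (fun θ : ℝ => θ + 2 * Real.arctan (k * Real.cos θ / (1 + k * Real.sin θ)))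
      (1 + 2 * ((1 / (1 + (k * Real.cos θ / (1 + k * Real.sin θ))^2)) *
        ((k * -Real.sin θ * (1 + k * Real.sin θ) - (k * Real.cos θ) * (k * Real.cos θ)) / (1 + k * Real.sin θ)^2))) θ :=
    (hasDerivAt_id θ).add (((Real.hasDerivAt_arctan _).comp θ hu).const_mul 2)
  have h2 := ha.div_const (1 - k^2)
  refine h2.congr_deriv (Eq.symm ?_)
  have hc : Real.cos θ ^ 2 = 1 - Real.sin θ ^ 2 := by
    have := Real.sin_sq_add_cos_sq θ; linarith
  have hk2 : (1:ℝ) - k^2 ≠ 0 := by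
    have : k^2 < 1 := by nlinarith [sq_abs k, abs_nonneg k]
    nlinarith
  field_simp
  ring_nf
  rw [hc]
  have hD' : 1 + k * Real.sin θ * 2 + k ^ 2 ≠ 0 := ne_of_gt (by linarith)
  field_simp
  ring

lemma contD (k : ℝ) : Continuous (fun θ : ℝ => 1 + k^2 + 2*k*Real.sin θ) := by
  continuity

lemma integral_one_div_D (k : ℝ) (hk : |k| < 1) :
    ∫ θ in (0:ℝ)..(2*π), 1 / (1 + k^2 + 2*k*Real.sin θ) = 2*π/(1-k^2) := by
  rw [intervalIntegral.integral_eq_sub_of_hasDerivAt (fun θ _ => hasDerivAt_G k hk θ)]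
  · simp [Real.sin_two_pi, Real.cos_two_pi]
    ring
  · exact (continuous_const.div (contD k) (fun θ => ne_of_gt (Dpos k θ hk))).intervalIntegrable _ _

/-- antiderivative of `cos² θ (2k+2 sin θ)/D` for `k ≠ 0` -/
lemma hasDerivAt_Phi (k : ℝ) (hk : |k| < 1) (hk0 : k ≠ 0) (θ : ℝ) :
    HasDerivAt (fun θ : ℝ => k*θ/2 + Real.sin θ * Real.cos θ / (2*k) - (1-k^2) * Real.cos θ / (2*k^2)
        + ((1-k^2)^2/(2*k^3)) * Real.arctan (k * Real.cos θ / (1 + k * Real.sin θ)))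
      (Real.cos θ^2 * (2*k + 2*Real.sin θ) / (1 + k^2 + 2*k*Real.sin θ)) θ := by
  have hden : 0 < 1 + k * Real.sin θ := one_add_k_sin_pos k θ hk
  have hD : 0 < 1 + k^2 + 2*k*Real.sin θ := Dpos k θ hk
  have hu : HasDerivAt (fun θ : ℝ => k * Real.cos θ / (1 + k * Real.sin θ))
      ((k * -Real.sin θ * (1 + k * Real.sin θ) - (k * Real.cos θ) * (k * Real.cos θ)) / (1 + k * Real.sin θ)^2) θ :=
    HasDerivAt.div ((Real.hasDerivAt_cos θ).const_mul k)
      (((Real.hasDerivAt_sin θ).const_mul k).const_add 1) (ne_of_gt hden)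
  have harc : HasDerivAt (fun θ : ℝ => ((1-k^2)^2/(2*k^3)) * Real.arctan (k * Real.cos θ / (1 + k * Real.sin θ)))
      (((1-k^2)^2/(2*k^3)) * ((1 / (1 + (k * Real.cos θ / (1 + k * Real.sin θ))^2)) *
        ((k * -Real.sin θ * (1 + k * Real.sin θ) - (k * Real.cos θ) * (k * Real.cos θ)) / (1 + k * Real.sin θ)^2))) θ :=
    ((Real.hasDerivAt_arctan _).comp θ hu).const_mul _
  have h1 : HasDerivAt (fun θ : ℝ => k*θ/2) (k/2) θ := by
    simpa using ((hasDerivAt_id θ).const_mul k).div_const 2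
  have h2 : HasDerivAt (fun θ : ℝ => Real.sin θ * Real.cos θ / (2*k))
      ((Real.cos θ * Real.cos θ + Real.sin θ * -Real.sin θ) / (2*k)) θ :=
    ((Real.hasDerivAt_sin θ).mul (Real.hasDerivAt_cos θ)).div_const (2*k)
  have h3 : HasDerivAt (fun θ : ℝ => (1-k^2) * Real.cos θ / (2*k^2))
      ((1-k^2) * -Real.sin θ / (2*k^2)) θ :=
    (((Real.hasDerivAt_cos θ).const_mul (1-k^2)).div_const (2*k^2))
  have h4 := ((h1.add h2).sub h3).add harc
  refine h4.congr_deriv (Eq.symm ?_)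
  have hc : Real.cos θ ^ 2 = 1 - Real.sin θ ^ 2 := by
    have := Real.sin_sq_add_cos_sq θ; linarith
  have hc4 : Real.cos θ ^ 4 = (1 - Real.sin θ ^ 2)^2 := by
    rw [show (4:ℕ) = 2*2 from rfl, pow_mul, hc]
  field_simp
  ring_nf
  rw [hc4, hc]
  ring

lemma integral_E (k : ℝ) (hk : |k| < 1) :
    ∫ θ in (0:ℝ)..(2*π), Real.cos θ^2 * (2*k + 2*Real.sin θ) / (1 + k^2 + 2*k*Real.sin θ) = π * k := by
  have hcont : Continuous (fun θ : ℝ => Real.cos θ^2 * (2*k + 2*Real.sin θ) / (1 + k^2 + 2*k*Real.sin θ)) := by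
    apply Continuous.div _ (contD k) (fun θ => ne_of_gt (Dpos k θ hk))
    continuity
  by_cases hk0 : k = 0
  · subst hk0
    have : ∀ θ ∈ Set.uIcc (0:ℝ) (2*π), HasDerivAt (fun θ : ℝ => -(2/3) * Real.cos θ^3)
        (Real.cos θ^2 * (2*0 + 2*Real.sin θ) / (1 + 0^2 + 2*0*Real.sin θ)) θ := by
      intro θ _
      have : HasDerivAt (fun θ : ℝ => -(2/3) * Real.cos θ^3)
          (-(2/3) * (3 * Real.cos θ^2 * -Real.sin θ)) θ :=
        (((Real.hasDerivAt_cos θ).pow 3).const_mul _)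
      convert this using 1
      field_simp; ring
    rw [intervalIntegral.integral_eq_sub_of_hasDerivAt this (hcont.intervalIntegrable _ _)]
    simp [Real.cos_two_pi]
  · rw [intervalIntegral.integral_eq_sub_of_hasDerivAt
      (fun θ _ => hasDerivAt_Phi k hk hk0 θ) (hcont.intervalIntegrable _ _)]
    simp [Real.sin_two_pi, Real.cos_two_pi]
    ring

noncomputable def Lfun (k : ℝ) : ℝ := ∫ θ in (0:ℝ)..(2*π), Real.cos θ^2 * Real.log (1 + k^2 + 2*k*Real.sin θ)

lemma contFk (k : ℝ) (hk : |k| < 1) :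
    Continuous (fun θ : ℝ => Real.cos θ^2 * Real.log (1 + k^2 + 2*k*Real.sin θ)) := by
  apply Continuous.mul (by continuity)
  exact Real.continuousOn_log.comp_continuous (contD k) (fun θ => ne_of_gt (Dpos k θ hk))

lemma hasDerivAt_L (k : ℝ) (hk : |k| < 1) : HasDerivAt Lfun (π * k) k := by
  set ε : ℝ := (1 - |k|)/2 with hε
  have hε0 : 0 < ε := by simp [hε]; linarith
  have hball : ∀ x ∈ Metric.ball k ε, |x| < (1 + |k|)/2 := by
    intro x hx
    rw [Metric.mem_ball, Real.dist_eq] at hx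
    calc |x| = |k + (x - k)| := by ring_nf
    _ ≤ |k| + |x - k| := abs_add_le _ _
    _ < |k| + ε := by linarith
    _ = (1 + |k|)/2 := by rw [hε]; ring
  have hm1 : (1 + |k|)/2 < 1 := by linarith
  have key := intervalIntegral.hasDerivAt_integral_of_dominated_loc_of_deriv_le
    (F := fun x θ => Real.cos θ^2 * Real.log (1 + x^2 + 2*x*Real.sin θ))
    (F' := fun x θ => Real.cos θ^2 * (2*x + 2*Real.sin θ) / (1 + x^2 + 2*x*Real.sin θ))
    (a := 0) (b := 2*π) (μ := volume) (x₀ := k)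
    (bound := fun _ => 4 / (1 - (1 + |k|)/2)^2) (Metric.ball_mem_nhds k hε0)
    ?_ ?_ ?_ ?_ ?_ ?_
  · have h2 := key.2
    rw [integral_E k hk] at h2
    exact h2
  · filter_upwards [Metric.ball_mem_nhds k hε0] with x hx
    exact ((contFk x (lt_trans (hball x hx) hm1)).aestronglyMeasurable).restrict
  · exact ((contFk k hk).intervalIntegrable _ _)
  · have : Continuous (fun θ : ℝ => Real.cos θ^2 * (2*k + 2*Real.sin θ) / (1 + k^2 + 2*k*Real.sin θ)) := by
      apply Continuous.div (by continuity) (contD k) (fun θ => ne_of_gt (Dpos k θ hk))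
    exact this.aestronglyMeasurable.restrict
  · apply MeasureTheory.ae_of_all
    intro θ _ x hx
    have hxm := hball x hx
    have hx1 : |x| < 1 := lt_trans hxm hm1
    have hb : (0:ℝ) < 1 - (1 + |k|)/2 := by linarith
    have hDx : (1 - (1 + |k|)/2)^2 ≤ 1 + x^2 + 2*x*Real.sin θ := by
      refine le_trans ?_ (D_ge x θ)
      have h1 : 1 - |x| ≥ 1 - (1 + |k|)/2 := by linarith
      nlinarith
    have hDx0 : (0:ℝ) < (1 - (1 + |k|)/2)^2 := pow_pos hb 2
    have hD : 0 < 1 + x^2 + 2*x*Real.sin θ := Dpos x θ hx1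
    have hnum : |Real.cos θ^2 * (2*x + 2*Real.sin θ)| ≤ 4 := by
      rw [abs_mul]
      have h1 : |Real.cos θ^2| ≤ 1 := by
        rw [abs_pow]
        exact pow_le_one₀ (abs_nonneg _) (Real.abs_cos_le_one θ)
      have h2 : |2*x + 2*Real.sin θ| ≤ 4 := by
        calc |2*x + 2*Real.sin θ| ≤ |2*x| + |2*Real.sin θ| := abs_add_le _ _
        _ = 2*|x| + 2*|Real.sin θ| := by rw [abs_mul, abs_mul]; norm_num
        _ ≤ 2*1 + 2*1 := by
            have h3 := Real.abs_sin_le_one θ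
            have h4 := le_of_lt hx1
            gcongr
        _ = 4 := by norm_num
      calc |Real.cos θ^2| * |2*x + 2*Real.sin θ| ≤ 1 * 4 :=
        mul_le_mul h1 h2 (abs_nonneg _) zero_le_one
      _ = 4 := by norm_num
    rw [Real.norm_eq_abs, abs_div, abs_of_pos hD]
    exact div_le_div₀ (by norm_num) hnum hDx0 hDx
  · exact (continuous_const.intervalIntegrable _ _)
  · apply MeasureTheory.ae_of_all
    intro θ _ x hx
    have hx1 : |x| < 1 := lt_trans (hball x hx) hm1
    have hD : 0 < 1 + x^2 + 2*x*Real.sin θ := Dpos x θ hx1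
    have hlog : HasDerivAt (fun x : ℝ => Real.log (1 + x^2 + 2*x*Real.sin θ))
        ((2*x + 2*Real.sin θ) / (1 + x^2 + 2*x*Real.sin θ)) x := by
      have hin : HasDerivAt (fun x : ℝ => 1 + x^2 + 2*x*Real.sin θ) (2*x + 2*Real.sin θ) x := by
        have h1 : HasDerivAt (fun x : ℝ => x^2) (2*x) x := by simpa using hasDerivAt_pow 2 x
        have h2 : HasDerivAt (fun x : ℝ => 2*x*Real.sin θ) (2*Real.sin θ) x := by
          simpa [mul_comm, mul_assoc] using (hasDerivAt_id x).const_mul (2*Real.sin θ)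
        exact (h1.const_add 1).add h2
      simpa [Function.comp_def, div_eq_inv_mul, mul_comm]
        using (Real.hasDerivAt_log (ne_of_gt hD)).comp x hin
    have := hlog.const_mul (Real.cos θ^2)
    simpa [mul_div_assoc] using this

lemma Lfun_zero : Lfun 0 = 0 := by
  unfold Lfun
  norm_num

lemma Lfun_eq (k : ℝ) (hk0 : 0 ≤ k) (hk : k < 1) : Lfun k = π * k^2 / 2 := by
  have habs : ∀ x ∈ Set.Icc (0:ℝ) k, |x| < 1 := by
    intro x hx
    rw [abs_of_nonneg hx.1]
    exact lt_of_le_of_lt hx.2 hk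
  have hconst := constant_of_has_deriv_right_zero
    (f := fun x => Lfun x - π * x^2 / 2) (a := 0) (b := k) ?_ ?_
  · have := hconst k (Set.right_mem_Icc.mpr hk0)
    rw [Lfun_zero] at this
    simp at this
    linarith
  · intro x hx
    exact ((hasDerivAt_L x (habs x hx)).sub
      (by
        have := ((hasDerivAt_pow 2 x).const_mul π).div_const 2
        refine this.congr_deriv (Eq.symm ?_)
        push_cast
        ring
        : HasDerivAt (fun x : ℝ => π * x^2 / 2) (π * x) x)).continuousAt.continuousWithinAt
  · intro x hx
    have h1 : HasDerivAt (fun x : ℝ => π * x^2 / 2) (π * x) x := by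
      have := ((hasDerivAt_pow 2 x).const_mul π).div_const 2
      refine this.congr_deriv (Eq.symm ?_)
      push_cast
      ring
    have := (hasDerivAt_L x (habs x (Set.mem_Icc_of_Ico hx))).sub h1
    exact (by simpa using this.hasDerivWithinAt : HasDerivWithinAt (Lfun - fun x => π * x ^ 2 / 2) 0 (Set.Ici x) x)

noncomputable def Lh (k : ℝ) : ℝ :=
  ∫ θ in (-(π/2))..(π/2), Real.cos θ^2 * Real.log (1 + k^2 + 2*k*Real.sin θ)

lemma Lh_half (k : ℝ) (hk : |k| < 1) : Lh k = Lfun k / 2 := by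
  have hint : ∀ a b : ℝ, IntervalIntegrable
      (fun θ : ℝ => Real.cos θ^2 * Real.log (1 + k^2 + 2*k*Real.sin θ)) volume a b :=
    fun a b => (contFk k hk).intervalIntegrable a b
  set f : ℝ → ℝ := fun θ => Real.cos θ^2 * Real.log (1 + k^2 + 2*k*Real.sin θ) with hf
  have h1 : (∫ θ in (0:ℝ)..(π/2), f θ) + ∫ θ in (π/2:ℝ)..(3*π/2), f θ
      = ∫ θ in (0:ℝ)..(3*π/2), f θ :=
    intervalIntegral.integral_add_adjacent_intervals (hint _ _) (hint _ _)
  have h2 : (∫ θ in (0:ℝ)..(3*π/2), f θ) + ∫ θ in (3*π/2:ℝ)..(2*π), f θ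
      = ∫ θ in (0:ℝ)..(2*π), f θ :=
    intervalIntegral.integral_add_adjacent_intervals (hint _ _) (hint _ _)
  have h3 : ∫ θ in (-(π/2):ℝ)..0, f θ = ∫ θ in (3*π/2:ℝ)..(2*π), f θ := by
    have := intervalIntegral.integral_comp_add_right (a := -(π/2)) (b := 0) f (2*π)
    rw [show -(π/2) + 2*π = 3*π/2 by ring, show (0:ℝ) + 2*π = 2*π by ring] at this
    rw [← this]
    apply intervalIntegral.integral_congr
    intro x _
    simp only [hf, Real.sin_add_two_pi, Real.cos_add_two_pi]
  have h4 : ∫ θ in (-(π/2):ℝ)..(π/2), f θ = ∫ θ in (π/2:ℝ)..(3*π/2), f θ := by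
    have := intervalIntegral.integral_comp_sub_left (a := -(π/2)) (b := π/2) f π
    rw [show π - π/2 = π/2 by ring, show π - -(π/2) = 3*π/2 by ring] at this
    rw [← this]
    apply intervalIntegral.integral_congr
    intro x _
    simp only [hf, Real.sin_pi_sub, Real.cos_pi_sub, neg_sq]
  have h5 : (∫ θ in (-(π/2):ℝ)..0, f θ) + ∫ θ in (0:ℝ)..(π/2), f θ
      = ∫ θ in (-(π/2):ℝ)..(π/2), f θ :=
    intervalIntegral.integral_add_adjacent_intervals (hint _ _) (hint _ _)
  have : Lfun k = 2 * Lh k := by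
    unfold Lfun Lh
    rw [← hf]
    linarith [h1, h2, h3, h4, h5]
  linarith [this]

lemma Lh_lt_one (k : ℝ) (hk0 : 0 ≤ k) (hk : k < 1) : Lh k = π * k^2 / 4 := by
  rw [Lh_half k (by rw [abs_of_nonneg hk0]; exact hk), Lfun_eq k hk0 hk]
  ring

lemma Lh_one : Lh 1 = π / 4 := by
  have hne : (𝓝[<] (1:ℝ)).NeBot := nhdsLT_neBot 1
  have hIoo : Set.Ioo (1/2 : ℝ) 1 ∈ 𝓝[<] (1:ℝ) :=
    Ioo_mem_nhdsLT_of_mem (by norm_num : (1:ℝ) ∈ Set.Ioc (1/2:ℝ) 1)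
  have hsin : ∀ θ ∈ Set.uIoc (-(π/2):ℝ) (π/2), -1 < Real.sin θ ∧ Real.sin θ ≤ 1 := by
    intro θ hθ
    rw [Set.uIoc_of_le (by linarith [Real.pi_pos] : -(π/2) ≤ π/2)] at hθ
    constructor
    · have := Real.strictMonoOn_sin (a := -(π/2)) (b := θ)
        ⟨le_refl _, by linarith [Real.pi_pos]⟩
        ⟨le_of_lt hθ.1, hθ.2⟩ hθ.1
      simpa using this
    · exact Real.sin_le_one θ
  have key := intervalIntegral.tendsto_integral_filter_of_dominated_convergence
    (F := fun (k : ℝ) (θ : ℝ) => Real.cos θ^2 * Real.log (1 + k^2 + 2*k*Real.sin θ))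
    (f := fun θ : ℝ => Real.cos θ^2 * Real.log (1 + (1:ℝ)^2 + 2*1*Real.sin θ))
    (μ := volume) (a := -(π/2)) (b := π/2) (l := 𝓝[<] (1:ℝ))
    (bound := fun θ => Real.cos θ^2 * Real.log 4
      + (1 - Real.sin θ) * |(1 + Real.sin θ) * Real.log (1 + Real.sin θ)|)
    ?_ ?_ ?_ ?_
  · -- combine with Lh k = π k²/4
    have h2 : Filter.Tendsto (fun k : ℝ => π * k^2 / 4) (𝓝[<] (1:ℝ)) (𝓝 (π/4)) := by
      have : Filter.Tendsto (fun k : ℝ => π * k^2 / 4) (𝓝 (1:ℝ)) (𝓝 (π * 1^2/4)) := by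
        apply Filter.Tendsto.div_const
        exact (continuous_pow 2).continuousAt.const_mul π
      simpa using this.mono_left nhdsWithin_le_nhds
    have heq : (fun k : ℝ => ∫ θ in (-(π/2))..(π/2),
        Real.cos θ^2 * Real.log (1 + k^2 + 2*k*Real.sin θ)) =ᶠ[𝓝[<] (1:ℝ)]
        (fun k : ℝ => π * k^2 / 4) := by
      filter_upwards [hIoo] with k hk
      exact Lh_lt_one k (by linarith [hk.1]) hk.2
    have h1 := key.congr' heq
    have := tendsto_nhds_unique h1 h2
    unfold Lh
    rw [← this]
  · filter_upwards [hIoo] with k hk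
    exact ((contFk k (by rw [abs_of_nonneg (by linarith [hk.1])]; exact hk.2)).aestronglyMeasurable).restrict
  · filter_upwards [hIoo] with k hk
    apply MeasureTheory.ae_of_all
    intro θ hθ
    obtain ⟨hs1, hs2⟩ := hsin θ hθ
    have hk1 : (1/2:ℝ) < k := hk.1
    have hk2 : k < 1 := hk.2
    have hD4 : 1 + k^2 + 2*k*Real.sin θ ≤ 4 := by nlinarith
    have hDge : 1 + Real.sin θ ≤ 1 + k^2 + 2*k*Real.sin θ := by nlinarith
    have hspos : 0 < 1 + Real.sin θ := by linarith
    have hDpos : 0 < 1 + k^2 + 2*k*Real.sin θ := by linarith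
    have hlog : |Real.log (1 + k^2 + 2*k*Real.sin θ)| ≤ Real.log 4 + |Real.log (1 + Real.sin θ)| := by
      rw [abs_le]
      constructor
      · have h1 : Real.log (1 + Real.sin θ) ≤ Real.log (1 + k^2 + 2*k*Real.sin θ) :=
          Real.log_le_log hspos hDge
        have h2 : -|Real.log (1 + Real.sin θ)| ≤ Real.log (1 + Real.sin θ) := neg_abs_le _
        have h3 : (0:ℝ) ≤ Real.log 4 := Real.log_nonneg (by norm_num)
        linarith
      · have h1 : Real.log (1 + k^2 + 2*k*Real.sin θ) ≤ Real.log 4 := Real.log_le_log hDpos hD4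
        have h2 : (0:ℝ) ≤ |Real.log (1 + Real.sin θ)| := abs_nonneg _
        linarith
    have hcs : Real.cos θ^2 = (1 - Real.sin θ) * (1 + Real.sin θ) := by
      have := Real.sin_sq_add_cos_sq θ; nlinarith
    rw [Real.norm_eq_abs, abs_mul, abs_pow, sq_abs]
    calc Real.cos θ^2 * |Real.log (1 + k^2 + 2*k*Real.sin θ)|
        ≤ Real.cos θ^2 * (Real.log 4 + |Real.log (1 + Real.sin θ)|) := by
          apply mul_le_mul_of_nonneg_left hlog (sq_nonneg _)
      _ = Real.cos θ^2 * Real.log 4 + (1 - Real.sin θ) * |(1 + Real.sin θ) * Real.log (1 + Real.sin θ)| := by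
          rw [abs_mul, abs_of_nonneg (le_of_lt hspos), hcs]
          ring
  · apply Continuous.intervalIntegrable
    apply Continuous.add (by continuity)
    apply Continuous.mul (by continuity)
    apply Continuous.abs
    have : Continuous (fun y : ℝ => y * Real.log y) := Real.continuous_mul_log
    exact this.comp (by continuity)
  · apply MeasureTheory.ae_of_all
    intro θ hθ
    obtain ⟨hs1, _⟩ := hsin θ hθ
    have hD1 : (0:ℝ) < 1 + (1:ℝ)^2 + 2*1*Real.sin θ := by norm_num; linarith
    have hc : ContinuousAt (fun k : ℝ => Real.cos θ^2 * Real.log (1 + k^2 + 2*k*Real.sin θ)) 1 := by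
      apply ContinuousAt.mul continuousAt_const
      have hp : ContinuousAt (fun k : ℝ => 1 + k^2 + 2*k*Real.sin θ) 1 := by fun_prop
      exact ContinuousAt.comp (g := Real.log) (f := fun k : ℝ => 1 + k^2 + 2*k*Real.sin θ)
        (x := (1:ℝ)) (Real.continuousAt_log (by norm_num; linarith)) hp
    exact hc.tendsto.mono_left nhdsWithin_le_nhds

lemma Lh_val (k : ℝ) (hk0 : 0 < k) (hk1 : k ≤ 1) : Lh k = π * k^2 / 4 := by
  rcases lt_or_eq_of_le hk1 with h | h
  · exact Lh_lt_one k (le_of_lt hk0) h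
  · rw [h, Lh_one]; norm_num

lemma cont_logsqrt : Continuous (fun x : ℝ => Real.log x * Real.sqrt x) := by
  rw [continuous_iff_continuousAt]
  intro x₀
  by_cases hx : x₀ = 0
  · subst hx
    have h1 : Filter.Tendsto (fun x : ℝ => Real.log x * Real.sqrt x) (𝓝[≤] 0) (𝓝 0) := by
      apply Filter.Tendsto.congr' _ tendsto_const_nhds
      filter_upwards [self_mem_nhdsWithin] with x (hx : x ≤ 0)
      rw [Real.sqrt_eq_zero_of_nonpos hx, mul_zero]
    have h2 : Filter.Tendsto (fun x : ℝ => Real.log x * Real.sqrt x) (𝓝[>] 0) (𝓝 0) := by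
      apply Filter.Tendsto.congr' _ (tendsto_log_mul_rpow_nhdsGT_zero (by norm_num : (0:ℝ) < 1/2))
      filter_upwards [self_mem_nhdsWithin] with x (_ : 0 < x)
      rw [Real.sqrt_eq_rpow]
    have h3 := h1.sup h2
    rw [nhdsLE_sup_nhdsGT] at h3
    have h0 : (fun x : ℝ => Real.log x * Real.sqrt x) 0 = 0 := by simp
    unfold ContinuousAt
    rw [h0]
    exact h3
  · exact (Real.continuousAt_log hx).mul Real.continuous_sqrt.continuousAt

lemma contFk_one : Continuous (fun θ : ℝ => Real.cos θ^2 * Real.log (1 + (1:ℝ)^2 + 2*1*Real.sin θ)) := by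
  have heq : (fun θ : ℝ => Real.cos θ^2 * Real.log (1 + (1:ℝ)^2 + 2*1*Real.sin θ))
      = fun θ : ℝ => ((1 - Real.sin θ)/2) * ((1 + (1:ℝ)^2 + 2*1*Real.sin θ) * Real.log (1 + (1:ℝ)^2 + 2*1*Real.sin θ)) := by
    funext θ
    have hc := Real.sin_sq_add_cos_sq θ
    set L := Real.log (1 + (1:ℝ)^2 + 2*1*Real.sin θ)
    linear_combination L * hc
  rw [heq]
  apply Continuous.mul (by continuity)
  exact Real.continuous_mul_log.comp (by continuity)

lemma contF_all (k : ℝ) (hk0 : 0 < k) (hk1 : k ≤ 1) :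
    Continuous (fun θ : ℝ => Real.cos θ^2 * Real.log (1 + k^2 + 2*k*Real.sin θ)) := by
  rcases lt_or_eq_of_le hk1 with h | h
  · exact contFk k (by rw [abs_of_pos hk0]; exact h)
  · subst h; exact contFk_one

lemma cont_g (lm lp : ℝ) (hlm : 0 ≤ lm) (hlp : 0 < lp) (hltlt : lm < lp) :
    Continuous (fun x : ℝ => (-Real.log x) * Real.sqrt ((lp - x) * (x - lm))) := by
  rcases lt_or_eq_of_le hlm with h | h
  · -- lm > 0
    rw [continuous_iff_continuousAt]
    intro x₀
    by_cases hx : x₀ = 0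
    · subst hx
      have hev : (fun x : ℝ => (-Real.log x) * Real.sqrt ((lp - x) * (x - lm)))
          =ᶠ[𝓝 0] (fun _ => 0) := by
        filter_upwards [Metric.ball_mem_nhds (0:ℝ) h] with x hx
        rw [Metric.mem_ball, Real.dist_eq, sub_zero] at hx
        have h1 : x < lm := lt_of_le_of_lt (le_abs_self x) hx
        have h3 : x < lp := lt_trans h1 hltlt
        have : (lp - x) * (x - lm) ≤ 0 := by nlinarith
        rw [Real.sqrt_eq_zero_of_nonpos this, mul_zero]
      rw [continuousAt_congr hev]
      exact continuousAt_const
    · exact ((Real.continuousAt_log hx).neg).mul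
        (Real.continuous_sqrt.continuousAt.comp (by fun_prop))
  · -- lm = 0
    subst h
    have heq : (fun x : ℝ => (-Real.log x) * Real.sqrt ((lp - x) * (x - 0)))
        = fun x : ℝ => -((Real.log x * Real.sqrt x) * Real.sqrt (lp - x)) := by
      funext x
      rcases le_or_gt x lp with hx | hx
      · rw [show (lp - x) * (x - 0) = (lp - x) * x by ring,
          Real.sqrt_mul (by linarith) x]
        ring
      · rw [Real.sqrt_eq_zero_of_nonpos (by nlinarith : (lp - x) * (x - 0) ≤ 0),
          Real.sqrt_eq_zero_of_nonpos (by linarith : lp - x ≤ 0)]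
        ring
    rw [heq]
    exact ((cont_logsqrt.mul (Real.continuous_sqrt.comp (by fun_prop))).neg)

lemma main_integral (σ2 k : ℝ) (hσ : 0 < σ2) (hk0 : 0 < k) (hk1 : k ≤ 1) :
    ∫ x in (σ2*(1-k)^2)..(σ2*(1+k)^2),
        (-Real.log x) * Real.sqrt ((σ2*(1+k)^2 - x) * (x - σ2*(1-k)^2))
      = -(2*π*σ2^2*k^2*Real.log σ2) - π*σ2^2*k^4 := by
  set lm := σ2*(1-k)^2 with hlm
  set lp := σ2*(1+k)^2 with hlp
  have hcontg : Continuous (fun x : ℝ => (-Real.log x) * Real.sqrt ((lp - x) * (x - lm))) :=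
    cont_g lm lp (by positivity) (by positivity) (by rw [hlm, hlp]; nlinarith)
  set φ : ℝ → ℝ := fun θ => σ2 * (1 + k^2 + 2*k*Real.sin θ) with hφdef
  have hφd : ∀ θ ∈ Set.uIcc (-(π/2)) (π/2), HasDerivAt φ (2*σ2*k*Real.cos θ) θ := by
    intro θ _
    have : HasDerivAt (fun θ : ℝ => σ2 * (1 + k^2 + 2*k*Real.sin θ))
        (σ2 * (2*k*Real.cos θ)) θ := by
      exact (((Real.hasDerivAt_sin θ).const_mul (2*k)).const_add (1+k^2)).const_mul σ2
    convert this using 1; ring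
  have hsub := intervalIntegral.integral_comp_smul_deriv hφd (by fun_prop) hcontg
  have hend1 : φ (-(π/2)) = lm := by
    show σ2 * (1 + k^2 + 2*k*Real.sin (-(π/2))) = σ2*(1-k)^2
    rw [Real.sin_neg, Real.sin_pi_div_two]; ring
  have hend2 : φ (π/2) = lp := by
    show σ2 * (1 + k^2 + 2*k*Real.sin (π/2)) = σ2*(1+k)^2
    rw [Real.sin_pi_div_two]; ring
  rw [hend1, hend2] at hsub
  rw [← hsub]
  have hcong : ∀ θ ∈ Set.uIcc (-(π/2):ℝ) (π/2),
      (2*σ2*k*Real.cos θ) • ((fun x : ℝ => (-Real.log x) * Real.sqrt ((lp - x) * (x - lm))) ∘ φ) θ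
      = (-(4*σ2^2*k^2*Real.log σ2)) * Real.cos θ^2
        + (-(4*σ2^2*k^2)) * (Real.cos θ^2 * Real.log (1 + k^2 + 2*k*Real.sin θ)) := by
    intro θ hθ
    rw [Set.uIcc_of_le (by linarith [Real.pi_pos])] at hθ
    have hcos : 0 ≤ Real.cos θ := Real.cos_nonneg_of_mem_Icc hθ
    have hsq : (lp - φ θ) * (φ θ - lm) = (2*σ2*k*Real.cos θ)^2 := by
      have hc := Real.sin_sq_add_cos_sq θ
      simp only [hφdef, hlm, hlp]
      linear_combination (-(4*σ2^2*k^2)) * hc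
    simp only [Function.comp_apply, smul_eq_mul]
    rw [hsq, Real.sqrt_sq (by positivity)]
    by_cases hcc : Real.cos θ = 0
    · simp [hcc]
    · have hcpos : 0 < Real.cos θ := lt_of_le_of_ne hcos (Ne.symm hcc)
      have hD : 0 < 1 + k^2 + 2*k*Real.sin θ := by
        have hc := Real.sin_sq_add_cos_sq θ
        have hs : -1 < Real.sin θ := by nlinarith
        nlinarith
      have : Real.log (φ θ) = Real.log σ2 + Real.log (1 + k^2 + 2*k*Real.sin θ) := by
        rw [hφdef]
        exact Real.log_mul (ne_of_gt hσ) (ne_of_gt hD)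
      rw [this]
      ring
  rw [intervalIntegral.integral_congr hcong]
  have hint1 : IntervalIntegrable (fun θ : ℝ => (-(4*σ2^2*k^2*Real.log σ2)) * Real.cos θ^2)
      volume (-(π/2)) (π/2) := (Continuous.intervalIntegrable (by continuity) _ _)
  have hint2 : IntervalIntegrable
      (fun θ : ℝ => (-(4*σ2^2*k^2)) * (Real.cos θ^2 * Real.log (1 + k^2 + 2*k*Real.sin θ)))
      volume (-(π/2)) (π/2) :=
    ((continuous_const.mul (contF_all k hk0 hk1)).intervalIntegrable _ _)
  rw [intervalIntegral.integral_add hint1 hint2,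
    intervalIntegral.integral_const_mul, intervalIntegral.integral_const_mul]
  have hcos2 : ∫ θ in (-(π/2):ℝ)..(π/2), Real.cos θ^2 = π/2 := by
    rw [integral_cos_sq]
    simp [Real.cos_pi_div_two, Real.sin_pi_div_two]
  have hLh : ∫ θ in (-(π/2):ℝ)..(π/2), Real.cos θ^2 * Real.log (1 + k^2 + 2*k*Real.sin θ)
      = π * k^2/4 := Lh_val k hk0 hk1
  rw [hcos2, hLh]
  ring

theorem stmt10 (α β l0 sg2 lm lp : ℝ) (hα : 1 ≤ α) (hαβ : α ≤ β)
    (hl0 : 0 ≤ l0) (hl0' : l0 < 1)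
    (hsg2 : sg2 = (1 - l0) / α)
    (hlm : lm = sg2 * (1 - Real.sqrt (α / β)) ^ 2)
    (hlp : lp = sg2 * (1 + Real.sqrt (α / β)) ^ 2) :
    (α / (2 * Real.pi * sg2 * (α / β)) *
        ∫ x in lm..lp, (-Real.log x) * Real.sqrt ((lp - x) * (x - lm)))
      - l0 * Real.log l0 =
    1 / (4 * α * β) *
      (-4 * α * β * l0 * Real.log l0
        + (8 * α * β * Real.log 2 - α ^ 2 - β ^ 2) * (1 - l0)
        - 4 * α * β * (1 - l0) *
            Real.log (-2 * ((α + β) * l0 - (β - α) * (1 - l0) - α - β) / (α * β))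
        + (α + β) * (β - α) * (1 - l0)) := by
  have hα0 : 0 < α := by linarith
  have hβ0 : 0 < β := by linarith
  have hσ : 0 < sg2 := by rw [hsg2]; exact div_pos (by linarith) hα0
  set k : ℝ := Real.sqrt (α / β) with hk
  have hk2 : k^2 = α / β := Real.sq_sqrt (by positivity)
  have hk0 : 0 < k := Real.sqrt_pos.mpr (by positivity)
  have hk1 : k ≤ 1 := by
    rw [hk, show (1:ℝ) = Real.sqrt 1 by rw [Real.sqrt_one]]
    exact Real.sqrt_le_sqrt ((div_le_one hβ0).mpr hαβ)
  have hI := main_integral sg2 k hσ hk0 hk1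
  subst hlm hlp
  rw [hI]
  -- rewrite the log argument on the RHS
  have harg : -2 * ((α + β) * l0 - (β - α) * (1 - l0) - α - β) / (α * β) = 4 * sg2 := by
    rw [hsg2]; field_simp; ring
  rw [harg]
  have hlog4 : Real.log (4 * sg2) = 2 * Real.log 2 + Real.log sg2 := by
    rw [Real.log_mul (by norm_num) (ne_of_gt hσ),
      show (4:ℝ) = 2^2 by norm_num, Real.log_pow]
    push_cast; ring
  rw [hlog4]
  -- eliminate k
  rw [show k^4 = (α/β)^2 by rw [show k^4 = (k^2)^2 by ring, hk2], hk2]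
  -- abstract the logs
  generalize Real.log sg2 = L
  generalize Real.log l0 = B
  generalize Real.log 2 = C
  subst hsg2
  have hπ := Real.pi_ne_zero
  have h1l0 : (0:ℝ) < 1 - l0 := by linarith
  field_simp
  ring
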